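/- Suppose for every finite family F of n discs, the hypergraph I(F) with vertex set F and hyperedges {D ∈ F : D ∩ b ≠ ∅} (over all discs b) has the property that every induced sub-hypergraph admits a proper coloring with at most 6 colors. Then for every assignment of lists L_D of size at least 1 + log_{6/5} n to the discs D ∈ F, there exists a choice of colors from the lists that is a conflict-free coloring of I(F). -/

import Mathlib

/-- The Euclidean plane. -/
abbrev Plane := EuclideanSpace ℝ (Fin 2)

/-- Abstract key lemma: iterative conflict-free list coloring.  At each step we pick a
color `x` present in some remaining list, take a proper 6-coloring of the remaining
vertices, color the heaviest color-class among the vertices whose list contains `x`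
with the color `x`, erase `x` from all lists, and recurse.  A potential-function
argument (`∑ (5/6)^|L v| < 1`) guarantees lists never run out. -/
lemma cf_key {n : ℕ} {ι : Type*} (P : ι → Fin n → Prop)
    (hyp : ∀ W : Finset (Fin n), ∃ col : Fin n → Fin 6, ∀ a : ι,
      2 ≤ {i : Fin n | i ∈ W ∧ P a i}.ncard →
      ∃ i ∈ W, P a i ∧ ∃ j ∈ W, P a j ∧ col i ≠ col j) :
    ∀ (U : Finset (Fin n)) (L : Fin n → Finset ℕ),
      (∑ v ∈ U, ((5:ℝ)/6) ^ (L v).card) < 1 →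
      ∃ φ : Fin n → ℕ, (∀ v ∈ U, φ v ∈ L v) ∧
        ∀ a : ι, (∃ i ∈ U, P a i) →
          ∃ i ∈ U, P a i ∧ ∀ j ∈ U, P a j → j ≠ i → φ j ≠ φ i := by
  intro U
  induction U using Finset.strongInductionOn with
  | _ U ih =>
  intro L hL
  rcases U.eq_empty_or_nonempty with rfl | ⟨u, hu⟩
  · exact ⟨fun _ => 0, by simp, by simp⟩
  have hwpos : ∀ v : Fin n, (0:ℝ) < ((5:ℝ)/6) ^ (L v).card := fun v => by positivity
  -- the list of `u` is nonempty
  have hcard : (L u).Nonempty := by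
    by_contra h
    rw [Finset.not_nonempty_iff_eq_empty] at h
    have h1 : ((5:ℝ)/6) ^ (L u).card ≤ ∑ v ∈ U, ((5:ℝ)/6) ^ (L v).card :=
      Finset.single_le_sum (fun v _ => (hwpos v).le) hu
    rw [h] at h1
    simp at h1
    linarith
  obtain ⟨x, hx⟩ := hcard
  obtain ⟨col, hcol⟩ := hyp U
  set w : Fin n → ℝ := fun v => ((5:ℝ)/6) ^ (L v).card with hw
  set S : Finset (Fin n) := U.filter (fun v => x ∈ L v) with hSdef
  have huS : u ∈ S := by simp [hSdef, hu, hx]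
  obtain ⟨t₀, -, ht₀⟩ := Finset.exists_max_image (Finset.univ : Finset (Fin 6))
    (fun t => ∑ v ∈ S.filter (fun v => col v = t), w v) ⟨0, Finset.mem_univ _⟩
  set A : Finset (Fin n) := S.filter (fun v => col v = t₀) with hAdef
  have hAS : A ⊆ S := Finset.filter_subset _ _
  have hSU : S ⊆ U := Finset.filter_subset _ _
  have hAU : A ⊆ U := hAS.trans hSU
  have hAx : ∀ v ∈ A, x ∈ L v := fun v hv => (Finset.mem_filter.mp (hAS hv)).2
  -- the heaviest fiber carries at least a sixth of the weight of `S`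
  have hS6 : ∑ v ∈ S, w v ≤ 6 * ∑ v ∈ A, w v := by
    calc ∑ v ∈ S, w v
        = ∑ t : Fin 6, ∑ v ∈ S.filter (fun v => col v = t), w v :=
          (Finset.sum_fiberwise S col w).symm
      _ ≤ ∑ _t : Fin 6, ∑ v ∈ A, w v :=
          Finset.sum_le_sum (fun t _ => ht₀ t (Finset.mem_univ t))
      _ = 6 * ∑ v ∈ A, w v := by
          rw [Finset.sum_const]
          simp
  have hwS : (0:ℝ) < ∑ v ∈ S, w v := by
    have := Finset.single_le_sum (f := w) (fun v _ => (hwpos v).le) huS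
    have := hwpos u
    linarith
  have hAne : A.Nonempty := by
    rw [Finset.nonempty_iff_ne_empty]
    intro h
    rw [h] at hS6
    simp at hS6
    linarith
  -- potential bound for the recursive call
  have hbound : ∑ v ∈ U \ A, ((5:ℝ)/6) ^ ((L v).erase x).card < 1 := by
    have hsplit := Finset.sum_filter_add_sum_filter_not (U \ A) (fun v => x ∈ L v)
      (fun v => ((5:ℝ)/6) ^ ((L v).erase x).card)
    have e1 : (U \ A).filter (fun v => x ∈ L v) = S \ A := by
      ext v
      simp only [hAdef, hSdef, Finset.mem_filter, Finset.mem_sdiff]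
      tauto
    have e2 : (U \ A).filter (fun v => x ∉ L v) = U.filter (fun v => x ∉ L v) := by
      ext v
      simp only [hAdef, hSdef, Finset.mem_filter, Finset.mem_sdiff]
      tauto
    have hv1 : ∀ v ∈ S \ A, ((5:ℝ)/6) ^ ((L v).erase x).card = (6/5) * w v := by
      intro v hv
      have hxv : x ∈ L v := (Finset.mem_filter.mp (Finset.mem_sdiff.mp hv).1).2
      have h1 : (L v).card = ((L v).erase x).card + 1 := (Finset.card_erase_add_one hxv).symm
      rw [hw]
      simp only
      rw [h1, pow_succ]
      ring
    have hv2 : ∀ v ∈ U.filter (fun v => x ∉ L v),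
        ((5:ℝ)/6) ^ ((L v).erase x).card = w v := by
      intro v hv
      have hxv : x ∉ L v := (Finset.mem_filter.mp hv).2
      rw [Finset.erase_eq_of_notMem hxv]
    rw [e1, e2, Finset.sum_congr rfl hv1, Finset.sum_congr rfl hv2] at hsplit
    rw [← hsplit]
    have hSA : ∑ v ∈ S \ A, w v = ∑ v ∈ S, w v - ∑ v ∈ A, w v :=
      Finset.sum_sdiff_eq_sub hAS
    have hUS : ∑ v ∈ U.filter (fun v => x ∉ L v), w v
        = ∑ v ∈ U, w v - ∑ v ∈ S, w v := by
      have := Finset.sum_filter_add_sum_filter_not U (fun v => x ∈ L v) w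
      rw [← hSdef] at this
      linarith
    rw [← Finset.mul_sum, hSA, hUS]
    have hU1 : ∑ v ∈ U, w v < 1 := hL
    linarith
  -- recursive call
  obtain ⟨φ', hmem', hcf'⟩ := ih (U \ A) (Finset.sdiff_ssubset hAU hAne)
    (fun v => (L v).erase x) hbound
  classical
  refine ⟨fun v => if v ∈ A then x else φ' v, ?_, ?_⟩
  · intro v hv
    by_cases hvA : v ∈ A
    · simpa [hvA] using hAx v hvA
    · simp only [hvA, if_false]
      exact Finset.erase_subset _ _ (hmem' v (Finset.mem_sdiff.mpr ⟨hv, hvA⟩))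
  · intro a ha
    by_cases h2 : ∃ i ∈ U \ A, P a i
    · obtain ⟨i, hiUA, hPi, huniq⟩ := hcf' a h2
      have hiA : i ∉ A := (Finset.mem_sdiff.mp hiUA).2
      refine ⟨i, (Finset.mem_sdiff.mp hiUA).1, hPi, ?_⟩
      intro j hjU hPj hji
      have hφi : φ' i ≠ x := Finset.ne_of_mem_erase (hmem' i hiUA)
      by_cases hjA : j ∈ A
      · simp only [hjA, if_true, hiA, if_false]
        exact fun h => hφi h.symm
      · simp only [hjA, if_false, hiA]
        exact huniq j (Finset.mem_sdiff.mpr ⟨hjU, hjA⟩) hPj hji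
    · obtain ⟨i₀, hi₀U, hPi₀⟩ := ha
      refine ⟨i₀, hi₀U, hPi₀, ?_⟩
      intro j hjU hPj hji
      exfalso
      have hnc : 2 ≤ {i : Fin n | i ∈ U ∧ P a i}.ncard := by
        have : 1 < {i : Fin n | i ∈ U ∧ P a i}.ncard := by
          rw [Set.one_lt_ncard_iff (Set.toFinite _)]
          exact ⟨j, i₀, ⟨hjU, hPj⟩, ⟨hi₀U, hPi₀⟩, hji⟩
        omega
      obtain ⟨i, hiU, hPi, j', hj'U, hPj', hne⟩ := hcol a hnc
      have hiA : i ∈ A := by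
        by_contra h
        exact h2 ⟨i, Finset.mem_sdiff.mpr ⟨hiU, h⟩, hPi⟩
      have hj'A : j' ∈ A := by
        by_contra h
        exact h2 ⟨j', Finset.mem_sdiff.mpr ⟨hj'U, h⟩, hPj'⟩
      have e1 : col i = t₀ := (Finset.mem_filter.mp hiA).2
      have e2 : col j' = t₀ := (Finset.mem_filter.mp hj'A).2
      exact hne (e1.trans e2.symm)

theorem discs_listCF
    (hyp : ∀ (n : ℕ) (c : Fin n → Plane) (r : Fin n → ℝ) (W : Finset (Fin n)),
      ∃ col : Fin n → Fin 6, ∀ (b : Plane) (s : ℝ),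
        2 ≤ ({i : Fin n | i ∈ W ∧
            (Metric.closedBall (c i) (r i) ∩ Metric.closedBall b s).Nonempty}).ncard →
        ∃ i ∈ W, (Metric.closedBall (c i) (r i) ∩ Metric.closedBall b s).Nonempty ∧
          ∃ j ∈ W, (Metric.closedBall (c j) (r j) ∩ Metric.closedBall b s).Nonempty ∧
            col i ≠ col j) :
    ∀ (n : ℕ), 1 ≤ n → ∀ (c : Fin n → Plane) (r : Fin n → ℝ) (L : Fin n → Finset ℕ),
      (∀ i, 1 + Real.logb (6 / 5) n ≤ ((L i).card : ℝ)) →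
      ∃ φ : Fin n → ℕ, (∀ i, φ i ∈ L i) ∧
        ∀ (b : Plane) (s : ℝ),
          {i : Fin n |
            (Metric.closedBall (c i) (r i) ∩ Metric.closedBall b s).Nonempty}.Nonempty →
          ∃ i, (Metric.closedBall (c i) (r i) ∩ Metric.closedBall b s).Nonempty ∧
            ∀ j, (Metric.closedBall (c j) (r j) ∩ Metric.closedBall b s).Nonempty →
              j ≠ i → φ j ≠ φ i := by
  intro n hn c r L hL
  have hn0 : (0:ℝ) < (n:ℝ) := by exact_mod_cast hn
  -- potential bound
  have hterm : ∀ i : Fin n, ((5:ℝ)/6) ^ (L i).card ≤ (5/6) * (n:ℝ)⁻¹ := by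
    intro i
    have h1 : ((5:ℝ)/6) ^ (L i).card = ((5:ℝ)/6) ^ ((L i).card : ℝ) :=
      (Real.rpow_natCast _ _).symm
    have h2 : ((5:ℝ)/6) ^ ((L i).card : ℝ) ≤ ((5:ℝ)/6) ^ (1 + Real.logb (6/5) (n:ℝ)) :=
      Real.rpow_le_rpow_of_exponent_ge (by norm_num) (by norm_num) (hL i)
    have h3 : ((5:ℝ)/6) ^ (1 + Real.logb (6/5) (n:ℝ)) = (5/6) * (n:ℝ)⁻¹ := by
      rw [Real.rpow_add (by norm_num), Real.rpow_one]
      congr 1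
      have h4 : ((5:ℝ)/6) = ((6:ℝ)/5)⁻¹ := by norm_num
      rw [h4, Real.inv_rpow (by norm_num), Real.rpow_logb (by norm_num) (by norm_num) hn0]
    rw [h1]
    linarith [h2, h3.le, h3.ge]
  have hbound : ∑ v ∈ (Finset.univ : Finset (Fin n)), ((5:ℝ)/6) ^ (L v).card < 1 := by
    calc ∑ v ∈ (Finset.univ : Finset (Fin n)), ((5:ℝ)/6) ^ (L v).card
        ≤ ∑ _v ∈ (Finset.univ : Finset (Fin n)), (5/6) * (n:ℝ)⁻¹ :=
          Finset.sum_le_sum (fun v _ => hterm v)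
      _ = (n:ℝ) * ((5/6) * (n:ℝ)⁻¹) := by
          rw [Finset.sum_const, Finset.card_univ, Fintype.card_fin, nsmul_eq_mul]
      _ = 5/6 := by field_simp
      _ < 1 := by norm_num
  have hyp' : ∀ W : Finset (Fin n), ∃ col : Fin n → Fin 6, ∀ a : Plane × ℝ,
      2 ≤ {i : Fin n | i ∈ W ∧
        (Metric.closedBall (c i) (r i) ∩ Metric.closedBall a.1 a.2).Nonempty}.ncard →
      ∃ i ∈ W, (Metric.closedBall (c i) (r i) ∩ Metric.closedBall a.1 a.2).Nonempty ∧
        ∃ j ∈ W, (Metric.closedBall (c j) (r j) ∩ Metric.closedBall a.1 a.2).Nonempty ∧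
          col i ≠ col j := by
    intro W
    obtain ⟨col, h⟩ := hyp n c r W
    exact ⟨col, fun a => h a.1 a.2⟩
  obtain ⟨φ, hmem, hcf⟩ := cf_key
    (fun (a : Plane × ℝ) (i : Fin n) =>
      (Metric.closedBall (c i) (r i) ∩ Metric.closedBall a.1 a.2).Nonempty)
    hyp' Finset.univ L hbound
  refine ⟨φ, fun i => hmem i (Finset.mem_univ i), ?_⟩
  intro b s hne
  obtain ⟨i₀, hi₀⟩ := hne
  obtain ⟨i, -, hPi, hu⟩ := hcf (b, s) ⟨i₀, Finset.mem_univ _, hi₀⟩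
  exact ⟨i, hPi, fun j hj hji => hu j (Finset.mem_univ _) hj hji⟩
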